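/- Let G be a graph with χ(G) ≥ 2. The symset chromatic spectrum of G is the full interval of integers Σ_{χ_sym}(G) = {2, 3, …, χ(G)}; that is, for every integer i with 2 ≤ i ≤ χ(G) there is a signature σ_i of G with χ_sym(G,σ_i) = i, and every value χ_sym(G,σ) lies in this interval. -/

import Mathlib

/-!
Common framework for symmetric-set colorings of signed graphs
(C. Cappello, E. Steffen, "Symmetric set coloring of signed graphs").

* A signed graph is a `SimpleGraph V` together with a signature
  `σ : Sym2 V → Bool` (`true` = positive edge, `false` = negative edge);
  only the values of `σ` on edges of `G` matter.
* The canonical symmetric set `S_{2k}^t` with `t` self-inverse elements and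
  `k` pairs of non-self-inverse elements is `Sym t k := Fin t ⊕ Fin k × Bool`,
  with negation `symNeg` fixing the `Fin t` part and swapping the Boolean.
-/

namespace SymSet

/-- The canonical symmetric set `S_{2k}^t`. -/
abbrev Sym (t k : ℕ) := Fin t ⊕ Fin k × Bool

/-- Negation on the symmetric set: self-inverse elements are fixed,
the two elements of each pair are exchanged. -/
def symNeg {t k : ℕ} : Sym t k → Sym t k
  | .inl i => .inl i
  | .inr (i, b) => .inr (i, !b)

/-- Action of a sign on a color: a positive sign acts trivially,
a negative sign acts by negation. -/
def signAct {t k : ℕ} (s : Bool) (x : Sym t k) : Sym t k :=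
  if s then x else symNeg x

variable {V : Type*}

/-- A proper `S_{2k}^t`-coloring of the signed graph `(G, σ)`:
`c v ≠ σ(e) · c w` for every edge `e = vw`. -/
def IsProperColoring (G : SimpleGraph V) (σ : Sym2 V → Bool) {t k : ℕ}
    (c : V → Sym t k) : Prop :=
  ∀ ⦃v w : V⦄, G.Adj v w → c v ≠ signAct (σ s(v, w)) (c w)

/-- `(G, σ)` admits a proper `S_{2k}^t`-coloring. -/
def SymColorable (G : SimpleGraph V) (σ : Sym2 V → Bool) (t k : ℕ) : Prop :=
  ∃ c : V → Sym t k, IsProperColoring G σ c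

/-- The symset `t`-chromatic number `χ^t_sym(G, σ)`: the least `t + 2k`
such that `(G, σ)` admits a proper `S_{2k}^t`-coloring. -/
noncomputable def symChromT (G : SimpleGraph V) (σ : Sym2 V → Bool) (t : ℕ) : ℕ :=
  sInf {n | ∃ k, n = t + 2 * k ∧ SymColorable G σ t k}

/-- The chromatic number of the underlying graph, as a natural number. -/
noncomputable def chrom (G : SimpleGraph V) : ℕ := G.chromaticNumber.toNat

/-- The symset chromatic number `χ_sym(G, σ)`: the minimum of
`χ^t_sym(G, σ)` over `0 ≤ t ≤ χ(G)`. -/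
noncomputable def symChrom (G : SimpleGraph V) (σ : Sym2 V → Bool) : ℕ :=
  sInf {n | ∃ t ≤ chrom G, n = symChromT G σ t}

/-- Switching a signature at the vertex set `X = {v | X v = true}`:
the sign of every edge with exactly one end in `X` is reversed. -/
def switch (X : V → Bool) (σ : Sym2 V → Bool) : Sym2 V → Bool :=
  fun e =>
    xor (Sym2.lift ⟨fun u v => xor (X u) (X v), fun u v => by simp [Bool.xor_comm]⟩ e) (σ e)

/-- Two signatures of `G` are equivalent if one is obtained from the other by a
switching (equality of signs is only required on the edges of `G`). -/
def Equivalent (G : SimpleGraph V) (σ σ' : Sym2 V → Bool) : Prop :=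
  ∃ X : V → Bool, ∀ e ∈ G.edgeSet, σ' e = switch X σ e

/-- The number of negative edges of a closed walk. -/
def negCount (σ : Sym2 V → Bool) {G : SimpleGraph V} {u : V} (w : G.Walk u u) : ℕ :=
  (w.edges.filter (fun e => !σ e)).length

/-- `(G, σ)` is balanced: every circuit has sign `+1`,
i.e. an even number of negative edges. -/
def Balanced (G : SimpleGraph V) (σ : Sym2 V → Bool) : Prop :=
  ∀ ⦃u : V⦄ (w : G.Walk u u), w.IsCycle → Even (negCount σ w)

/-- `(G, σ)` is antibalanced: every even circuit has sign `+1` and every odd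
circuit has sign `-1`. -/
def Antibalanced (G : SimpleGraph V) (σ : Sym2 V → Bool) : Prop :=
  ∀ ⦃u : V⦄ (w : G.Walk u u), w.IsCycle → (Even w.length ↔ Even (negCount σ w))

/-- Restriction of a signature to (the induced subgraph on) a vertex subset. -/
def restrict (σ : Sym2 V → Bool) (s : Set V) : Sym2 s → Bool :=
  fun e => σ (Sym2.map Subtype.val e)

/-- A circuit: a connected 2-regular graph. -/
def IsCircuit (G : SimpleGraph V) [Fintype V] [DecidableRel G.Adj] : Prop :=
  G.Connected ∧ G.IsRegularOfDegree 2

/-- The frustration index `l(G, σ)`: the least number of edges whose deletion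
makes the signed graph balanced. -/
noncomputable def frustrationIndex (G : SimpleGraph V) (σ : Sym2 V → Bool) : ℕ :=
  sInf {n | ∃ F : Finset (Sym2 V), F.card = n ∧ Balanced (G.deleteEdges ↑F) σ}

/-- A proper coloring of the signed expansion `±G` (each edge of `G` replaced by
a positive and a negative parallel edge): for each edge `vw` of `G`,
`c v ∉ {c w, -c w}`. -/
def IsProperExpColoring (G : SimpleGraph V) {t k : ℕ} (c : V → Sym t k) : Prop :=
  ∀ ⦃v w : V⦄, G.Adj v w → c v ≠ c w ∧ c v ≠ symNeg (c w)

/-- The symset `t`-chromatic number of the signed expansion `±G`. -/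
noncomputable def expSymChromT (G : SimpleGraph V) (t : ℕ) : ℕ :=
  sInf {n | ∃ k, n = t + 2 * k ∧ ∃ c : V → Sym t k, IsProperExpColoring G c}

end SymSet

namespace SymSet

section Lemmas

open SimpleGraph

variable {V : Type*} [Fintype V] {G : SimpleGraph V}

lemma chrom_le_of_colorable {n : ℕ} (h : G.Colorable n) : chrom G ≤ n := by
  have h2 := ENat.toNat_le_toNat h.chromaticNumber_le (ENat.coe_ne_top n)
  simpa [chrom] using h2

lemma colorable_chrom : G.Colorable (chrom G) :=
  G.colorable_chromaticNumber_of_fintype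

lemma not_colorable_of_lt {n : ℕ} (h : n < chrom G) : ¬ G.Colorable n :=
  fun hc => absurd (chrom_le_of_colorable hc) (by omega)

lemma exists_adj (h : 2 ≤ chrom G) : ∃ v w, G.Adj v w := by
  by_contra hc
  push_neg at hc
  have hcol : G.Colorable 1 :=
    ⟨SimpleGraph.Coloring.mk (fun _ => (0 : Fin 1))
      (fun {v w} hadj => absurd hadj (hc v w))⟩
  have := chrom_le_of_colorable hcol
  omega

/-- Deleting vertices decreases the chromatic number by at most one each time, so from any
set with non-`j`-colorable induced subgraph one can extract one that is exactly
`(j+1)`-chromatic. -/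
lemma exists_critical [DecidableEq V] (j : ℕ) :
    ∀ S : Finset V, ¬ (G.induce ↑S).Colorable j →
      ∃ T : Finset V, T ⊆ S ∧ (G.induce ↑T).Colorable (j + 1) ∧
        ¬ (G.induce ↑T).Colorable j := by
  intro S
  induction S using Finset.strongInduction with
  | _ S ih =>
    intro hS
    by_cases hcol : (G.induce ↑S).Colorable (j + 1)
    · exact ⟨S, subset_rfl, hcol, hS⟩
    · have hne : S.Nonempty := by
        rcases S.eq_empty_or_nonempty with rfl | h
        · exact absurd ⟨SimpleGraph.Coloring.mk
            (fun x => (False.elim (by simpa using x.2) : Fin j))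
            (fun {v w} _ => False.elim (by simpa using v.2))⟩ hS
        · exact h
      obtain ⟨v, hv⟩ := hne
      have hS' : ¬ (G.induce ↑(S.erase v)).Colorable j := by
        rintro ⟨C'⟩
        refine hcol ⟨SimpleGraph.Coloring.mk
          (fun u => if h : u.1 = v then Fin.last j
            else (C' ⟨u.1, by
              have : u.1 ∈ S := by simpa using u.2
              simp [Finset.mem_erase, h, this]⟩).castSucc) ?_⟩
        intro u w hadj
        have hadj' : G.Adj u.1 w.1 := hadj
        have hne' : u.1 ≠ w.1 := hadj'.ne
        split_ifs with h1 h2 h2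
        · exact absurd (h1.trans h2.symm) hne'
        · exact fun heq => absurd heq.symm (Fin.castSucc_lt_last _).ne
        · exact fun heq => absurd heq (Fin.castSucc_lt_last _).ne
        · intro heq
          have heq2 := Fin.castSucc_injective _ heq
          have hadj2 : (G.induce (↑(S.erase v) : Set V)).Adj
              ⟨u.1, by simp [Finset.mem_erase, h1]⟩
              ⟨w.1, by simp [Finset.mem_erase, h2]⟩ := hadj'
          exact C'.valid hadj2 heq2
      obtain ⟨T, hTsub, h1, h2⟩ := ih (S.erase v) (Finset.erase_ssubset hv) hS'
      exact ⟨T, hTsub.trans (Finset.erase_subset _ _), h1, h2⟩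

/-- There is an induced subgraph with chromatic number exactly `i`. -/
lemma exists_crit [DecidableEq V] {i : ℕ} (hi1 : 1 ≤ i) (hi : i ≤ chrom G) :
    ∃ T : Finset V, (G.induce ↑T).Colorable i ∧ ¬ (G.induce ↑T).Colorable (i - 1) := by
  have base : ¬ (G.induce ↑(Finset.univ : Finset V)).Colorable (i - 1) := by
    rintro ⟨C⟩
    have hcol : G.Colorable (i - 1) :=
      ⟨SimpleGraph.Coloring.mk (fun v => C ⟨v, by simp⟩) (fun {v w} h => C.valid h)⟩
    have := chrom_le_of_colorable hcol
    omega
  obtain ⟨T, _, h1, h2⟩ := exists_critical (G := G) (i - 1) Finset.univ base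
  have hii : i - 1 + 1 = i := by omega
  exact ⟨T, by rwa [hii] at h1, h2⟩

lemma symColorable_chrom (σ : Sym2 V → Bool) : SymColorable G σ (chrom G) 0 := by
  obtain ⟨C⟩ := colorable_chrom (G := G)
  refine ⟨fun v => Sum.inl (C v), ?_⟩
  intro v w h heq
  have : signAct (σ s(v, w)) (Sum.inl (C w) : Sym (chrom G) 0) = Sum.inl (C w) := by
    cases σ s(v, w) <;> rfl
  rw [this] at heq
  exact C.valid h (Sum.inl.inj heq)

lemma symColorable_many (σ : Sym2 V → Bool) (t : ℕ) :
    SymColorable G σ t (Fintype.card V) := by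
  classical
  refine ⟨fun v => Sum.inr (Fintype.equivFin V v, true), ?_⟩
  intro v w h heq
  cases hb : σ s(v, w) <;> rw [hb] at heq <;> simp [signAct, symNeg] at heq
  exact h.ne heq

lemma symChromT_le {σ : Sym2 V → Bool} {t k : ℕ} (h : SymColorable G σ t k) :
    symChromT G σ t ≤ t + 2 * k :=
  Nat.sInf_le ⟨k, rfl, h⟩

lemma symChromT_mem (σ : Sym2 V → Bool) (t : ℕ) :
    ∃ k, symChromT G σ t = t + 2 * k ∧ SymColorable G σ t k := by
  have hne : {n | ∃ k, n = t + 2 * k ∧ SymColorable G σ t k}.Nonempty :=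
    ⟨t + 2 * Fintype.card V, ⟨Fintype.card V, rfl, symColorable_many σ t⟩⟩
  exact Nat.sInf_mem hne

lemma symChrom_le {σ : Sym2 V → Bool} {t : ℕ} (ht : t ≤ chrom G) :
    symChrom G σ ≤ symChromT G σ t :=
  Nat.sInf_le ⟨t, ht, rfl⟩

lemma symChrom_mem (σ : Sym2 V → Bool) :
    ∃ t ≤ chrom G, symChrom G σ = symChromT G σ t := by
  have hne : {n | ∃ t ≤ chrom G, n = symChromT G σ t}.Nonempty :=
    ⟨symChromT G σ (chrom G), ⟨chrom G, le_rfl, rfl⟩⟩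
  exact Nat.sInf_mem hne

lemma two_le_of_symColorable (h2 : 2 ≤ chrom G) {σ : Sym2 V → Bool} {t k : ℕ}
    (hc : SymColorable G σ t k) : 2 ≤ t + 2 * k := by
  by_contra hlt
  push_neg at hlt
  have hk : k = 0 := by omega
  subst hk
  have ht : t ≤ 1 := by omega
  obtain ⟨c, hc⟩ := hc
  obtain ⟨v, w, hvw⟩ := exists_adj h2
  have hprop := hc hvw
  obtain ⟨a, ha⟩ : ∃ a : Fin t, c v = Sum.inl a := by
    cases hcv : c v with
    | inl a => exact ⟨a, rfl⟩
    | inr p => exact Fin.elim0 p.1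
  obtain ⟨b, hb⟩ : ∃ b : Fin t, c w = Sum.inl b := by
    cases hcw : c w with
    | inl b => exact ⟨b, rfl⟩
    | inr p => exact Fin.elim0 p.1
  have hab : a = b := by
    have := a.isLt; have := b.isLt
    exact Fin.ext (by omega)
  apply hprop
  rw [ha, hb, hab]
  cases σ s(v, w) <;> rfl

lemma symChrom_ge_two (h2 : 2 ≤ chrom G) (σ : Sym2 V → Bool) : 2 ≤ symChrom G σ := by
  obtain ⟨t, ht, heq⟩ := symChrom_mem σ
  obtain ⟨k, hk, hcol⟩ := symChromT_mem (G := G) σ t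
  rw [heq, hk]
  exact two_le_of_symColorable h2 hcol

lemma symChrom_le_chrom (σ : Sym2 V → Bool) : symChrom G σ ≤ chrom G := by
  refine (symChrom_le le_rfl).trans ?_
  have := symChromT_le (symColorable_chrom (G := G) σ)
  omega

lemma attained [DecidableEq V] {i : ℕ} (hi2 : 2 ≤ i) (hi : i ≤ chrom G) :
    ∃ σ : Sym2 V → Bool, symChrom G σ = i := by
  obtain ⟨T, hcol, hncol⟩ := exists_crit (G := G) (by omega : 1 ≤ i) hi
  obtain ⟨C⟩ := hcol
  set φ : V → Fin i := fun v => if h : v ∈ T then C ⟨v, by simpa using h⟩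
    else ⟨0, by omega⟩ with hφ
  set σ : Sym2 V → Bool := Sym2.lift ⟨fun v w =>
      decide ((v ∈ T ∧ w ∈ T) ∨ (v ∉ T ∧ w ∈ T ∧ (φ w : ℕ) = i - 1) ∨
        (w ∉ T ∧ v ∈ T ∧ (φ v : ℕ) = i - 1)),
      fun v w => decide_eq_decide.mpr (by tauto)⟩ with hσdef
  have hσ_mk : ∀ v w : V, σ s(v, w) =
      decide ((v ∈ T ∧ w ∈ T) ∨ (v ∉ T ∧ w ∈ T ∧ (φ w : ℕ) = i - 1) ∨
        (w ∉ T ∧ v ∈ T ∧ (φ v : ℕ) = i - 1)) := fun v w => rfl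
  refine ⟨σ, le_antisymm ?_ ?_⟩
  · -- upper bound : symChrom ≤ i
    have hupper : SymColorable G σ (i - 2) 1 := by
      refine ⟨fun v => if h : v ∈ T then
        (if hlt : (φ v : ℕ) < i - 2 then Sum.inl ⟨(φ v : ℕ), hlt⟩
          else if (φ v : ℕ) = i - 1 then Sum.inr (0, false) else Sum.inr (0, true))
        else Sum.inr (0, true), ?_⟩
      intro v w hadj
      have hviso := (φ v).isLt
      have hwiso := (φ w).isLt
      by_cases hv : v ∈ T <;> by_cases hw : w ∈ T
      · -- both in T
        have hσt : σ s(v, w) = true := by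
          rw [hσ_mk]; simp [hv, hw]
        have hadj' : (G.induce (↑T : Set V)).Adj ⟨v, by simpa using hv⟩ ⟨w, by simpa using hw⟩ :=
          hadj
        have hφne : (φ v : ℕ) ≠ (φ w : ℕ) := by
          intro hvw
          exact C.valid hadj' (by simpa [hφ, hv, hw] using Fin.ext hvw)
        rw [hσt]
        simp only [signAct, if_true]
        split_ifs <;> simp_all <;> omega
      · have hadjne := hadj.ne
        by_cases hl : (φ v : ℕ) = i - 1
        · have hσt : σ s(v, w) = true := by rw [hσ_mk]; simp [hv, hw, hl]
          rw [hσt]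
          simp only [signAct, if_true]
          split_ifs <;> simp_all <;> omega
        · have hσf : σ s(v, w) = false := by rw [hσ_mk]; simp [hv, hw, hl]
          rw [hσf]
          simp only [signAct, Bool.false_eq_true, if_false]
          split_ifs <;> simp [symNeg, hv, hw] <;> omega
      · by_cases hl : (φ w : ℕ) = i - 1
        · have hσt : σ s(v, w) = true := by rw [hσ_mk]; simp [hv, hw, hl]
          rw [hσt]
          simp only [signAct, if_true]
          split_ifs <;> simp_all <;> omega
        · have hσf : σ s(v, w) = false := by rw [hσ_mk]; simp [hv, hw, hl]
          rw [hσf]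
          simp only [signAct, Bool.false_eq_true, if_false]
          split_ifs <;> simp [symNeg, hv, hw] <;> omega
      · have hσf : σ s(v, w) = false := by rw [hσ_mk]; simp [hv, hw]
        rw [hσf]
        simp [signAct, symNeg, hv, hw]
    have h1 : symChrom G σ ≤ symChromT G σ (i - 2) := symChrom_le (by omega)
    have h2 : symChromT G σ (i - 2) ≤ (i - 2) + 2 * 1 := symChromT_le hupper
    omega
  · -- lower bound : i ≤ symChrom
    obtain ⟨t, ht, heq⟩ := symChrom_mem σ
    obtain ⟨k, hk, c, hc⟩ := symChromT_mem (G := G) σ t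
    rw [heq, hk]
    by_contra hlt
    push_neg at hlt
    have Ccol : (G.induce (↑T : Set V)).Coloring (Sym t k) := by
      refine SimpleGraph.Coloring.mk (fun u => c u.1) ?_
      intro u w hadj
      have hadj' : G.Adj u.1 w.1 := hadj
      have hp := hc hadj'
      have hu : u.1 ∈ T := by simpa using u.2
      have hw : w.1 ∈ T := by simpa using w.2
      have hσt : σ s(u.1, w.1) = true := by rw [hσ_mk]; simp [hu, hw]
      rw [hσt] at hp
      simpa [signAct] using hp
    have hcard : Fintype.card (Sym t k) = t + 2 * k := by
      simp [Fintype.card_sum, Fintype.card_prod]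
      omega
    have : (G.induce (↑T : Set V)).Colorable (i - 1) := by
      refine Ccol.colorable.mono ?_
      omega
    exact hncol this
  
end Lemmas

/-- for a graph `G` with `χ(G) ≥ 2`, the symset chromatic
spectrum of `G` is the full interval `{2, 3, …, χ(G)}`: every value
`χ_sym(G,σ)` lies in this interval, and every integer of the interval is
attained by some signature. -/
theorem stmt17 {V : Type*} [Fintype V] (G : SimpleGraph V) (h : 2 ≤ chrom G) :
    {n | ∃ σ : Sym2 V → Bool, symChrom G σ = n} = Set.Icc 2 (chrom G) := by
  classical
  ext n
  simp only [Set.mem_setOf_eq, Set.mem_Icc]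
  constructor
  · rintro ⟨σ, rfl⟩
    exact ⟨symChrom_ge_two h σ, symChrom_le_chrom σ⟩
  · rintro ⟨h2n, hn⟩
    exact attained h2n hn

end SymSet
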